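/- Let D be an open neighborhood of 0 in ℂ and f, g functions on D × (ℤ^n)^p such that f − g satisfies condition (H1) and g satisfies condition (H2). Then Res_{s=0} Σ_{l∈(ℤ^n)^p} f(s,l) = Σ_{l∈(ℤ^n)^p} Res_{s=0} g(s,l); that is, residue and summation over l may be interchanged. -/

import Mathlib

open scoped BigOperators

open MeasureTheory Metric Real

/-- Circle integral of a sum is the sum of circle integrals. -/
lemma circleIntegral_add' {f g : ℂ → ℂ} {c : ℂ} {R : ℝ} (hf : CircleIntegrable f c R)
    (hg : CircleIntegrable g c R) :
    (∮ z in C(c, R), (f z + g z)) = (∮ z in C(c, R), f z) + ∮ z in C(c, R), g z := by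
  simp only [circleIntegral, smul_add, intervalIntegral.integral_add hf.out hg.out]

/-- interchange of residue at `0` and summation over `l ∈ (ℤ^n)^p`.
If `f − g` satisfies (H1) (witnessed by analytic extensions `F l` on the ball of radius
`ρ` with a summable uniform bound) and `g` satisfies (H2) (witnessed by analytic
extensions `G l` on the punctured ball of radius `ρ'` with summable uniform bounds on
every annulus), then `Res_{s=0} Σ_l f(s,l) = Σ_l Res_{s=0} g(s,l)`; residues are
expressed as circle integrals over a circle of radius `η` inside both balls. -/
theorem stmt11 {n p : ℕ} (D : Set ℂ) (hD : IsOpen D) (h0 : (0 : ℂ) ∈ D)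
    (f g : ℂ → (Fin p → Fin n → ℤ) → ℂ)
    (ρ ρ' : ℝ) (hρ : 0 < ρ) (hρ' : 0 < ρ')
    (F G : (Fin p → Fin n → ℤ) → ℂ → ℂ)
    -- (H1) for f − g, with extensions F
    (hFan : ∀ l, AnalyticOnNhd ℂ (F l) (Metric.ball (0 : ℂ) ρ))
    (hFeq : ∀ l, ∀ s ∈ D ∩ Metric.ball (0 : ℂ) ρ, s ≠ 0 → F l s = f s l - g s l)
    (hFbd : ∃ M : (Fin p → Fin n → ℤ) → ℝ, Summable M ∧
        ∀ l, ∀ s ∈ Metric.ball (0 : ℂ) ρ, ‖F l s‖ ≤ M l)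
    -- (H2) for g, with extensions G
    (hGan : ∀ l, AnalyticOnNhd ℂ (G l) (Metric.ball (0 : ℂ) ρ' \ {0}))
    (hGeq : ∀ l, ∀ s ∈ D ∩ Metric.ball (0 : ℂ) ρ', s ≠ 0 → G l s = g s l)
    (hGbd : ∀ δ : ℝ, 0 < δ → δ < ρ' → ∃ M : (Fin p → Fin n → ℤ) → ℝ, Summable M ∧
        ∀ l, ∀ s : ℂ, δ < ‖s‖ → ‖s‖ < ρ' → ‖G l s‖ ≤ M l)
    (η : ℝ) (hη : 0 < η) (hηρ : η < ρ) (hηρ' : η < ρ') :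
    (∮ z in C(0, η), ∑' l : Fin p → Fin n → ℤ, (F l z + G l z))
      = ∑' l : Fin p → Fin n → ℤ, ∮ z in C(0, η), G l z := by
  obtain ⟨M, hMsum, hMbd⟩ := hFbd
  obtain ⟨M', hM'sum, hM'bd⟩ := hGbd (η / 2) (by linarith) (by linarith)
  -- membership of the circle in the two domains
  have hmemρ : ∀ θ : ℝ, circleMap 0 η θ ∈ Metric.ball (0 : ℂ) ρ := by
    intro θ
    simp only [Metric.mem_ball, Complex.dist_eq, sub_zero, norm_circleMap_zero,
      abs_of_pos hη]
    exact hηρ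
  have hmemρ' : ∀ θ : ℝ, circleMap 0 η θ ∈ Metric.ball (0 : ℂ) ρ' \ {0} := by
    intro θ
    constructor
    · simp only [Metric.mem_ball, Complex.dist_eq, sub_zero, norm_circleMap_zero,
        abs_of_pos hη]
      exact hηρ'
    · simpa using circleMap_ne_center (c := (0 : ℂ)) hη.ne' (θ := θ)
  -- continuity on the circle
  have hFcont : ∀ l, Continuous fun θ : ℝ => F l (circleMap 0 η θ) := by
    intro l
    refine continuous_iff_continuousAt.2 fun θ => ?_
    exact ((hFan l _ (hmemρ θ)).continuousAt).comp (continuous_circleMap 0 η).continuousAt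
  have hGcont : ∀ l, Continuous fun θ : ℝ => G l (circleMap 0 η θ) := by
    intro l
    refine continuous_iff_continuousAt.2 fun θ => ?_
    exact ((hGan l _ (hmemρ' θ)).continuousAt).comp (continuous_circleMap 0 η).continuousAt
  -- bounds on the circle
  have hnorm : ∀ θ : ℝ, ‖circleMap 0 η θ‖ = η := by
    intro θ
    simp [norm_circleMap_zero, abs_of_pos hη]
  have hFb : ∀ l θ, ‖F l (circleMap 0 η θ)‖ ≤ M l := fun l θ => hMbd l _ (hmemρ θ)
  have hGb : ∀ l θ, ‖G l (circleMap 0 η θ)‖ ≤ M' l := by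
    intro l θ
    refine hM'bd l _ ?_ ?_ <;> rw [hnorm θ] <;> linarith
  have hM0 : ∀ l, 0 ≤ M l := fun l => le_trans (norm_nonneg _) (hFb l 0)
  have hM'0 : ∀ l, 0 ≤ M' l := fun l => le_trans (norm_nonneg _) (hGb l 0)
  -- circle integrability
  have hFci : ∀ l, CircleIntegrable (F l) 0 η := by
    intro l
    refine ContinuousOn.circleIntegrable hη.le ?_
    exact ((hFan l).continuousOn).mono fun z hz =>
      (sphere_subset_closedBall.trans (closedBall_subset_ball hηρ)) hz
  have hGci : ∀ l, CircleIntegrable (G l) 0 η := by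
    intro l
    refine ContinuousOn.circleIntegrable hη.le ?_
    refine ((hGan l).continuousOn).mono fun z hz => ?_
    have hz' : ‖z‖ = η := by simpa [Complex.dist_eq] using hz
    constructor
    · simp only [Metric.mem_ball, Complex.dist_eq, sub_zero]
      rw [hz']; exact hηρ'
    · simp only [Set.mem_singleton_iff]
      intro h
      rw [h] at hz'; simp at hz'; linarith
  -- the integrand as a function of θ
  set h : (Fin p → Fin n → ℤ) → ℝ → ℂ :=
    fun l θ => (circleMap 0 η θ * Complex.I) • (F l (circleMap 0 η θ) + G l (circleMap 0 η θ))
    with hh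
  have hbound : ∀ l θ, ‖h l θ‖ ≤ η * (M l + M' l) := by
    intro l θ
    rw [hh]
    have hI : ‖circleMap 0 η θ * Complex.I‖ = η := by
      rw [norm_mul, hnorm θ]; simp
    simp only [norm_smul, hI]
    refine mul_le_mul_of_nonneg_left ?_ hη.le
    exact le_trans (norm_add_le _ _) (add_le_add (hFb l θ) (hGb l θ))
  have hcont : ∀ l, Continuous (h l) := by
    intro l
    exact ((continuous_circleMap 0 η).mul continuous_const).smul ((hFcont l).add (hGcont l))
  -- interchange of sum and integral
  have key : (∫ θ in Set.Ioc (0:ℝ) (2*π), ∑' l, h l θ) = ∑' l, ∫ θ in Set.Ioc (0:ℝ) (2*π), h l θ := by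
    refine MeasureTheory.integral_tsum (fun l => (hcont l).aestronglyMeasurable) ?_
    have hbd : ∀ l, (∫⁻ θ in Set.Ioc (0:ℝ) (2*π), ‖h l θ‖₊)
        ≤ ENNReal.ofReal (η * (M l + M' l)) * ENNReal.ofReal (2*π) := by
      intro l
      calc (∫⁻ θ in Set.Ioc (0:ℝ) (2*π), ‖h l θ‖₊)
          ≤ ∫⁻ _ in Set.Ioc (0:ℝ) (2*π), ENNReal.ofReal (η * (M l + M' l)) := by
            refine MeasureTheory.lintegral_mono fun θ => ?_
            rw [← ENNReal.ofReal_coe_nnreal, coe_nnnorm]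
            exact ENNReal.ofReal_le_ofReal (hbound l θ)
        _ = ENNReal.ofReal (η * (M l + M' l)) * ENNReal.ofReal (2*π) := by
            rw [MeasureTheory.lintegral_const, Measure.restrict_apply_univ, Real.volume_Ioc,
              sub_zero]
    have hsum2 : Summable fun l => η * (M l + M' l) := (hMsum.add hM'sum).mul_left η
    refine ne_top_of_le_ne_top ?_ (ENNReal.tsum_le_tsum hbd)
    rw [ENNReal.tsum_mul_right, ← ENNReal.ofReal_tsum_of_nonneg
      (fun l => mul_nonneg hη.le (add_nonneg (hM0 l) (hM'0 l))) hsum2]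
    exact ENNReal.mul_ne_top ENNReal.ofReal_ne_top ENNReal.ofReal_ne_top
  -- rewrite the LHS circle integral as the set integral of the tsum
  have hFG_zero : ∀ l, (∮ z in C(0, η), F l z) = 0 := by
    intro l
    refine Complex.circleIntegral_eq_zero_of_differentiable_on_off_countable hη.le
      Set.countable_empty ?_ ?_
    · exact ((hFan l).continuousOn).mono (closedBall_subset_ball hηρ)
    · intro z hz
      exact ((hFan l) z (Metric.ball_subset_ball hηρ.le hz.1)).differentiableAt
  have lhs_eq : (∮ z in C(0, η), ∑' l : Fin p → Fin n → ℤ, (F l z + G l z))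
      = ∫ θ in Set.Ioc (0:ℝ) (2*π), ∑' l, h l θ := by
    rw [circleIntegral, intervalIntegral.integral_of_le Real.two_pi_pos.le]
    refine MeasureTheory.setIntegral_congr_fun measurableSet_Ioc fun θ _ => ?_
    simp only [deriv_circleMap, hh, smul_eq_mul]
    exact (tsum_mul_left).symm
  have rhs_eq : ∀ l, (∫ θ in Set.Ioc (0:ℝ) (2*π), h l θ) = ∮ z in C(0, η), G l z := by
    intro l
    have : (∫ θ in Set.Ioc (0:ℝ) (2*π), h l θ)
        = ∮ z in C(0, η), (F l z + G l z) := by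
      rw [circleIntegral, intervalIntegral.integral_of_le Real.two_pi_pos.le]
      refine MeasureTheory.setIntegral_congr_fun measurableSet_Ioc fun θ _ => ?_
      simp only [deriv_circleMap, hh]
    rw [this, circleIntegral_add' (hFci l) (hGci l), hFG_zero l, zero_add]
  rw [lhs_eq, key]
  exact tsum_congr rhs_eq
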